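/- Lipschitz property of sparse networks (node-sparse version): consider networks g_Θ̄(x) := f^L[Θ̄^{L-1} ⋯ f¹[Θ̄⁰ x]] with depth L ≥ 1, where each f^j satisfies f^j(0)=0 and is 1-Lipschitz w.r.t. Euclidean norms. If Θ̄ = (Θ̄^{L-1},…,Θ̄⁰) and Γ̄ = (Γ̄^{L-1},…,Γ̄⁰) both satisfy max_j ‖Θ̄^j‖_{2,1} ≤ 1 and max_j ‖Γ̄^j‖_{2,1} ≤ 1, then for all x ∈ ℝ^d, ‖g_Θ̄(x) − g_Γ̄(x)‖₂ ≤ √L · ‖x‖₂ · ‖Θ̄ − Γ̄‖_F, where ‖Θ̄ − Γ̄‖_F := (∑_{j=0}^{L-1} ‖Θ̄^j − Γ̄^j‖_F²)^{1/2}. -/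

import Mathlib

/-- The ℓ2/ℓ1-norm of a matrix: sum over columns of the Euclidean column norms. -/
noncomputable def norm21 {a b : ℕ} (M : Matrix (Fin a) (Fin b) ℝ) : ℝ :=
  ∑ k, Real.sqrt (∑ i, (M i k) ^ 2)

/-- The network `net j x = f^j[Θ^{j-1} ⋯ f¹[Θ⁰ x]]` (with `net 0 x = x`). -/
noncomputable def net (p : ℕ → ℕ)
    (Θ : ∀ k, Matrix (Fin (p (k + 1))) (Fin (p k)) ℝ)
    (f : ∀ k, EuclideanSpace ℝ (Fin (p k)) → EuclideanSpace ℝ (Fin (p k))) :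
    (j : ℕ) → EuclideanSpace ℝ (Fin (p 0)) → EuclideanSpace ℝ (Fin (p j))
  | 0 => fun x => x
  | j + 1 => fun x => f (j + 1) (Matrix.toEuclideanLin (Θ j) (net p Θ f j x))

lemma toEuc_apply {a b : ℕ} (M : Matrix (Fin a) (Fin b) ℝ) (y : EuclideanSpace ℝ (Fin b)) (i : Fin a) :
    Matrix.toEuclideanLin M y i = ∑ k, M i k * y k := by
  simp [Matrix.toEuclideanLin, Matrix.mulVec, dotProduct, WithLp.equiv]

lemma coord_le_norm {b : ℕ} (y : EuclideanSpace ℝ (Fin b)) (k : Fin b) : |y k| ≤ ‖y‖ := by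
  rw [EuclideanSpace.norm_eq, ← Real.sqrt_sq_eq_abs]
  apply Real.sqrt_le_sqrt
  have := Finset.single_le_sum (f := fun i => ‖y i‖ ^ 2) (fun i _ => by positivity) (Finset.mem_univ k)
  simpa [Real.norm_eq_abs, sq_abs] using this

lemma norm_toEuc_le_frob {a b : ℕ} (M : Matrix (Fin a) (Fin b) ℝ) (y : EuclideanSpace ℝ (Fin b)) :
    ‖Matrix.toEuclideanLin M y‖ ≤ Real.sqrt (∑ i, ∑ k, (M i k) ^ 2) * ‖y‖ := by
  rw [EuclideanSpace.norm_eq, EuclideanSpace.norm_eq, ← Real.sqrt_mul (by positivity)]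
  apply Real.sqrt_le_sqrt
  rw [Finset.sum_mul]
  apply Finset.sum_le_sum
  intro i _
  rw [Real.norm_eq_abs, sq_abs, toEuc_apply]
  calc (∑ k, M i k * y k) ^ 2 ≤ (∑ k, (M i k)^2) * ∑ k, (y k)^2 :=
        Finset.sum_mul_sq_le_sq_mul_sq _ _ _
    _ = (∑ k, (M i k)^2) * ∑ k, ‖y k‖^2 := by simp [Real.norm_eq_abs, sq_abs]

lemma norm_toEuc_le_norm21 {a b : ℕ} (M : Matrix (Fin a) (Fin b) ℝ) (y : EuclideanSpace ℝ (Fin b)) :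
    ‖Matrix.toEuclideanLin M y‖ ≤ norm21 M * ‖y‖ := by
  have hrep : Matrix.toEuclideanLin M y
      = ∑ k, y k • (EuclideanSpace.equiv (Fin a) ℝ).symm (fun i => M i k) := by
    ext i
    rw [toEuc_apply]
    have h : (∑ k, y k • (EuclideanSpace.equiv (Fin a) ℝ).symm (fun i => M i k)) i
        = ∑ k, (y k • (EuclideanSpace.equiv (Fin a) ℝ).symm (fun i => M i k)) i :=
      by rw [WithLp.ofLp_sum]; exact Finset.sum_apply i Finset.univ _
    rw [h]
    exact Finset.sum_congr rfl fun k _ => mul_comm _ _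
  rw [hrep, norm21, Finset.sum_mul]
  refine (norm_sum_le _ _).trans (Finset.sum_le_sum fun k _ => ?_)
  rw [norm_smul, Real.norm_eq_abs]
  have h1 : ‖(EuclideanSpace.equiv (Fin a) ℝ).symm (fun i => M i k)‖
      = Real.sqrt (∑ i, (M i k) ^ 2) := by
    rw [EuclideanSpace.norm_eq]
    congr 1
    exact Finset.sum_congr rfl fun i _ => by rw [Real.norm_eq_abs, sq_abs]; rfl
  rw [h1, mul_comm]
  exact mul_le_mul_of_nonneg_left (coord_le_norm y k) (Real.sqrt_nonneg _)

lemma norm_f_le {n : ℕ} (f : EuclideanSpace ℝ (Fin n) → EuclideanSpace ℝ (Fin n))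
    (hf0 : f 0 = 0) (hlip : LipschitzWith 1 f) (y : EuclideanSpace ℝ (Fin n)) : ‖f y‖ ≤ ‖y‖ := by
  have := hlip.dist_le_mul y 0
  simpa [hf0, dist_eq_norm] using this

/-- Lipschitz property of node-sparse networks: if all activations
vanish at 0 and are 1-Lipschitz (Euclidean) and both parameters have all layerwise
ℓ2/ℓ1-norms at most 1, then
`‖g_Θ̄(x) − g_Γ̄(x)‖₂ ≤ √L ‖x‖₂ ‖Θ̄ − Γ̄‖_F`. -/
theorem net_lipschitz_node_sparse (L : ℕ) (hL : 1 ≤ L) (p : ℕ → ℕ)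
    (Θ Γ : ∀ k, Matrix (Fin (p (k + 1))) (Fin (p k)) ℝ)
    (f : ∀ k, EuclideanSpace ℝ (Fin (p k)) → EuclideanSpace ℝ (Fin (p k)))
    (hf0 : ∀ k, f k 0 = 0) (hlip : ∀ k, LipschitzWith 1 (f k))
    (hΘ : ∀ j < L, norm21 (Θ j) ≤ 1) (hΓ : ∀ j < L, norm21 (Γ j) ≤ 1)
    (x : EuclideanSpace ℝ (Fin (p 0))) :
    ‖net p Θ f L x - net p Γ f L x‖ ≤
      Real.sqrt L * ‖x‖ *
        Real.sqrt (∑ j ∈ Finset.range L, ∑ i, ∑ k, (Θ j i k - Γ j i k) ^ 2) := by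
  -- norm of Γ-net stays bounded by ‖x‖
  have hnetΓ : ∀ j ≤ L, ‖net p Γ f j x‖ ≤ ‖x‖ := by
    intro j hj
    induction j with
    | zero => exact le_refl _
    | succ j ih =>
      have hj' : j < L := lt_of_lt_of_le (Nat.lt_succ_self j) hj
      calc ‖net p Γ f (j+1) x‖
          ≤ ‖Matrix.toEuclideanLin (Γ j) (net p Γ f j x)‖ :=
            norm_f_le _ (hf0 _) (hlip _) _
        _ ≤ norm21 (Γ j) * ‖net p Γ f j x‖ := norm_toEuc_le_norm21 _ _
        _ ≤ 1 * ‖x‖ := by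
            apply mul_le_mul (hΓ j hj') (ih hj'.le) (norm_nonneg _) zero_le_one
        _ = ‖x‖ := one_mul _
  set F : ℕ → ℝ := fun j => Real.sqrt (∑ i, ∑ k, (Θ j i k - Γ j i k) ^ 2) with hF
  -- main induction
  have key : ∀ j ≤ L, ‖net p Θ f j x - net p Γ f j x‖ ≤ ‖x‖ * ∑ i ∈ Finset.range j, F i := by
    intro j hj
    induction j with
    | zero => simp [net]
    | succ j ih =>
      have hj' : j < L := lt_of_lt_of_le (Nat.lt_succ_self j) hj
      have step : ‖net p Θ f (j+1) x - net p Γ f (j+1) x‖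
          ≤ ‖net p Θ f j x - net p Γ f j x‖ + F j * ‖x‖ := by
        calc ‖net p Θ f (j+1) x - net p Γ f (j+1) x‖
            ≤ ‖Matrix.toEuclideanLin (Θ j) (net p Θ f j x)
                - Matrix.toEuclideanLin (Γ j) (net p Γ f j x)‖ := by
              have := (hlip (j+1)).dist_le_mul
                (Matrix.toEuclideanLin (Θ j) (net p Θ f j x))
                (Matrix.toEuclideanLin (Γ j) (net p Γ f j x))
              simpa [dist_eq_norm, net] using this
          _ = ‖Matrix.toEuclideanLin (Θ j) (net p Θ f j x - net p Γ f j x)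
                + Matrix.toEuclideanLin (Θ j - Γ j) (net p Γ f j x)‖ := by
              congr 1
              simp [map_sub, LinearMap.sub_apply]
          _ ≤ ‖Matrix.toEuclideanLin (Θ j) (net p Θ f j x - net p Γ f j x)‖
                + ‖Matrix.toEuclideanLin (Θ j - Γ j) (net p Γ f j x)‖ := norm_add_le _ _
          _ ≤ norm21 (Θ j) * ‖net p Θ f j x - net p Γ f j x‖
                + F j * ‖net p Γ f j x‖ := by
              gcongr
              · exact norm_toEuc_le_norm21 _ _
              · simpa [hF, Matrix.sub_apply] using norm_toEuc_le_frob (Θ j - Γ j) (net p Γ f j x)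
          _ ≤ ‖net p Θ f j x - net p Γ f j x‖ + F j * ‖x‖ := by
              gcongr
              · calc norm21 (Θ j) * ‖net p Θ f j x - net p Γ f j x‖
                    ≤ 1 * ‖net p Θ f j x - net p Γ f j x‖ :=
                      mul_le_mul_of_nonneg_right (hΘ j hj') (norm_nonneg _)
                  _ = _ := one_mul _
              · exact hnetΓ j hj'.le
      rw [Finset.sum_range_succ, mul_add]
      calc ‖net p Θ f (j+1) x - net p Γ f (j+1) x‖
          ≤ ‖net p Θ f j x - net p Γ f j x‖ + F j * ‖x‖ := step
        _ ≤ ‖x‖ * ∑ i ∈ Finset.range j, F i + ‖x‖ * F j := by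
            rw [mul_comm (F j)]; exact add_le_add (ih hj'.le) le_rfl
  -- Cauchy–Schwarz to finish
  have CS : ∑ i ∈ Finset.range L, F i
      ≤ Real.sqrt L * Real.sqrt (∑ j ∈ Finset.range L, ∑ i, ∑ k, (Θ j i k - Γ j i k) ^ 2) := by
    have hFnn : ∀ i, 0 ≤ F i := fun i => Real.sqrt_nonneg _
    have h2 : (∑ i ∈ Finset.range L, 1 * F i) ^ 2
        ≤ (∑ i ∈ Finset.range L, (1:ℝ)^2) * ∑ i ∈ Finset.range L, F i ^ 2 :=
      Finset.sum_mul_sq_le_sq_mul_sq _ _ _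
    have h3 : ∑ i ∈ Finset.range L, F i ^ 2
        = ∑ j ∈ Finset.range L, ∑ i, ∑ k, (Θ j i k - Γ j i k) ^ 2 :=
      Finset.sum_congr rfl fun j _ => Real.sq_sqrt (by positivity)
    have h4 : (∑ i ∈ Finset.range L, F i) ^ 2
        ≤ (L : ℝ) * ∑ j ∈ Finset.range L, ∑ i, ∑ k, (Θ j i k - Γ j i k) ^ 2 := by
      simpa [h3] using h2
    calc ∑ i ∈ Finset.range L, F i
        = Real.sqrt ((∑ i ∈ Finset.range L, F i) ^ 2) :=
          (Real.sqrt_sq (Finset.sum_nonneg fun i _ => hFnn i)).symm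
      _ ≤ Real.sqrt ((L : ℝ) * ∑ j ∈ Finset.range L, ∑ i, ∑ k, (Θ j i k - Γ j i k) ^ 2) :=
          Real.sqrt_le_sqrt h4
      _ = _ := Real.sqrt_mul (Nat.cast_nonneg L) _
  calc ‖net p Θ f L x - net p Γ f L x‖ ≤ ‖x‖ * ∑ i ∈ Finset.range L, F i := key L le_rfl
    _ ≤ ‖x‖ * (Real.sqrt L * Real.sqrt (∑ j ∈ Finset.range L, ∑ i, ∑ k, (Θ j i k - Γ j i k) ^ 2)) :=
        mul_le_mul_of_nonneg_left CS (norm_nonneg _)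
    _ = _ := by ring
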